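/- Let f: ℝᵖ → ℝ be twice continuously differentiable with L-Lipschitz gradient, bounded below by f*. For SGD-type iterates x_{t+1} = x_t − ρ d_t where d_t satisfies ⟨∇f(x_t), d_t⟩ ≥ ‖∇f(x_t)‖² − δ_t and ‖d_t‖ ≤ G, with step ρ ≤ 1/L, after T steps min_{0≤t<T} ‖∇f(x_t)‖² ≤ 2(f(x₀) − f*)/(ρT) + (2/T)∑_t δ_t + ρLG². -/

import Mathlib

open InnerProductSpace intervalIntegral

/-- Descent lemma: quadratic upper bound for a function with Lipschitz gradient. -/
lemma descent_lemma {F : Type*} [NormedAddCommGroup F] [InnerProductSpace ℝ F]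
    [CompleteSpace F] (f : F → ℝ) (hf : Differentiable ℝ f) (L : NNReal)
    (hLip : LipschitzWith L (gradient f)) (x v : F) :
    f (x + v) ≤ f x + inner ℝ (gradient f x) v + (L : ℝ) / 2 * ‖v‖ ^ 2 := by
  set c : ℝ := inner ℝ (gradient f x) v with hc
  have hfd : ∀ y : F, (fderiv ℝ f y) v = inner ℝ (gradient f y) v := by
    intro y
    have : toDual ℝ F (gradient f y) = fderiv ℝ f y :=
      (toDual ℝ F).apply_symm_apply _
    rw [← this, toDual_apply_apply]
  have hline : ∀ t : ℝ, HasDerivAt (fun s : ℝ => x + s • v) v t := by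
    intro t
    simpa using ((hasDerivAt_id t).smul_const v).const_add x
  have hg : ∀ t : ℝ, HasDerivAt (fun s : ℝ => f (x + s • v))
      (inner ℝ (gradient f (x + t • v)) v) t := by
    intro t
    have := (hf (x + t • v)).hasFDerivAt.comp_hasDerivAt t (hline t)
    rw [hfd] at this
    exact this
  have hcont : Continuous fun t : ℝ => (inner ℝ (gradient f (x + t • v)) v : ℝ) := by
    have h1 : Continuous fun t : ℝ => gradient f (x + t • v) :=
      hLip.continuous.comp (by fun_prop)
    exact h1.inner continuous_const
  have hint : (∫ t in (0:ℝ)..1, (inner ℝ (gradient f (x + t • v)) v : ℝ)) =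
      f (x + v) - f x := by
    have := intervalIntegral.integral_eq_sub_of_hasDerivAt
      (f := fun s : ℝ => f (x + s • v)) (fun t _ => hg t)
      (hcont.intervalIntegrable 0 1)
    simpa using this
  have hmono : (∫ t in (0:ℝ)..1, (inner ℝ (gradient f (x + t • v)) v : ℝ)) ≤
      ∫ t in (0:ℝ)..1, (c + (L : ℝ) * ‖v‖ ^ 2 * t) := by
    apply intervalIntegral.integral_mono_on (by norm_num)
      (hcont.intervalIntegrable 0 1) (by apply Continuous.intervalIntegrable; fun_prop)
    intro t ht
    have hdist := hLip.dist_le_mul (x + t • v) x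
    rw [dist_eq_norm, dist_eq_norm] at hdist
    have h1 : (inner ℝ (gradient f (x + t • v)) v : ℝ) - c =
        inner ℝ (gradient f (x + t • v) - gradient f x) v := by
      rw [inner_sub_left]
    have h2 : (inner ℝ (gradient f (x + t • v) - gradient f x) v : ℝ) ≤
        ‖gradient f (x + t • v) - gradient f x‖ * ‖v‖ := real_inner_le_norm _ _
    have h3 : ‖x + t • v - x‖ = t * ‖v‖ := by
      rw [add_sub_cancel_left, norm_smul, Real.norm_eq_abs, abs_of_nonneg ht.1]
    rw [h3] at hdist
    have h4 := mul_le_mul_of_nonneg_right hdist (norm_nonneg v)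
    nlinarith [h4, h1, h2]
  have hval : (∫ t in (0:ℝ)..1, (c + (L : ℝ) * ‖v‖ ^ 2 * t)) =
      c + (L : ℝ) / 2 * ‖v‖ ^ 2 := by
    rw [intervalIntegral.integral_add (by apply intervalIntegrable_const)
      (by apply Continuous.intervalIntegrable; fun_prop)]
    rw [intervalIntegral.integral_const_mul, integral_id, intervalIntegral.integral_const]
    norm_num
    ring
  linarith [hint ▸ hmono, hval ▸ hmono]
theorem inexact_gradient_descent_bound {p : ℕ}
    (f : EuclideanSpace ℝ (Fin p) → ℝ) (hf : ContDiff ℝ 2 f)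
    (L : NNReal) (hL : 0 < L) (hLip : LipschitzWith L (gradient f))
    (fstar : ℝ) (hbdd : ∀ x, fstar ≤ f x)
    (ρ : ℝ) (hρ : 0 < ρ) (hρL : ρ ≤ 1 / (L : ℝ))
    (G : ℝ) (δ : ℕ → ℝ)
    (x d : ℕ → EuclideanSpace ℝ (Fin p))
    (hx : ∀ t, x (t + 1) = x t - ρ • d t)
    (hd1 : ∀ t, ‖gradient f (x t)‖ ^ 2 - δ t ≤ inner ℝ (gradient f (x t)) (d t))
    (hd2 : ∀ t, ‖d t‖ ≤ G)
    (T : ℕ) (hT : 0 < T) :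
    ∃ t < T, ‖gradient f (x t)‖ ^ 2 ≤
      2 * (f (x 0) - fstar) / (ρ * T) +
        (2 / T) * ∑ s ∈ Finset.range T, δ s + ρ * L * G ^ 2 := by
  have hdiff : Differentiable ℝ f := hf.differentiable (by norm_num)
  set gsq : ℕ → ℝ := fun t => ‖gradient f (x t)‖ ^ 2 with hgsq
  have hG0 : 0 ≤ G := le_trans (norm_nonneg (d 0)) (hd2 0)
  -- per-step descent inequality
  have key : ∀ t, ρ * gsq t ≤ f (x t) - f (x (t + 1)) + ρ * δ t
      + (L : ℝ) / 2 * ρ ^ 2 * G ^ 2 := by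
    intro t
    simp only [hgsq]
    have hdesc := descent_lemma f hdiff L hLip (x t) (-(ρ • d t))
    have hxeq : x t + -(ρ • d t) = x (t + 1) := by rw [hx t]; abel
    rw [hxeq] at hdesc
    have hip : (inner ℝ (gradient f (x t)) (-(ρ • d t)) : ℝ) =
        -(ρ * inner ℝ (gradient f (x t)) (d t)) := by
      rw [inner_neg_right, real_inner_smul_right]
    have hnm : ‖-(ρ • d t)‖ ^ 2 = ρ ^ 2 * ‖d t‖ ^ 2 := by
      rw [norm_neg, norm_smul, Real.norm_eq_abs, mul_pow, sq_abs]
    rw [hip, hnm] at hdesc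
    have hdsq : ‖d t‖ ^ 2 ≤ G ^ 2 := by
      have := hd2 t; nlinarith [norm_nonneg (d t)]
    have h1 := hd1 t
    have hL0 : (0:ℝ) ≤ (L:ℝ) := L.coe_nonneg
    nlinarith [mul_le_mul_of_nonneg_left h1 hρ.le,
      mul_le_mul_of_nonneg_left hdsq (by positivity : (0:ℝ) ≤ (L:ℝ)/2 * ρ^2)]
  -- sum it up
  set S : ℝ := ∑ s ∈ Finset.range T, gsq s with hS
  set D : ℝ := ∑ s ∈ Finset.range T, δ s with hD
  have hsum : ρ * S ≤ (f (x 0) - fstar) + ρ * D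
      + (T : ℝ) * ((L : ℝ) / 2 * ρ ^ 2 * G ^ 2) := by
    have h1 : ∑ t ∈ Finset.range T, (ρ * gsq t) ≤
        ∑ t ∈ Finset.range T, (f (x t) - f (x (t + 1)) + ρ * δ t
          + (L : ℝ) / 2 * ρ ^ 2 * G ^ 2) :=
      Finset.sum_le_sum fun t _ => key t
    have h2 : ∑ t ∈ Finset.range T, (f (x t) - f (x (t + 1))) =
        f (x 0) - f (x T) := Finset.sum_range_sub' (fun t => f (x t)) T
    have h3 : fstar ≤ f (x T) := hbdd _
    rw [Finset.sum_add_distrib, Finset.sum_add_distrib, h2, Finset.sum_const,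
      ← Finset.mul_sum, Finset.card_range, nsmul_eq_mul, ← Finset.mul_sum] at h1
    linarith
  -- pick the minimizer
  obtain ⟨t0, ht0T, ht0min⟩ := Finset.exists_min_image (Finset.range T) gsq
    ⟨0, Finset.mem_range.2 hT⟩
  refine ⟨t0, Finset.mem_range.1 ht0T, ?_⟩
  have hTS : (T : ℝ) * gsq t0 ≤ S := by
    calc (T : ℝ) * gsq t0 = ∑ _s ∈ Finset.range T, gsq t0 := by
          rw [Finset.sum_const, Finset.card_range, nsmul_eq_mul]
      _ ≤ S := Finset.sum_le_sum fun s hs => ht0min s hs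
  have hS0 : 0 ≤ S := Finset.sum_nonneg fun s _ => by positivity
  have hTpos : (0:ℝ) < (T : ℝ) := Nat.cast_pos.2 hT
  set M : ℝ := ((f (x 0) - fstar) + ρ * D + (T : ℝ) * ((L : ℝ)/2 * ρ^2 * G^2)) / (ρ * T)
    with hM
  have hρT : (0:ℝ) < ρ * T := by positivity
  have hM0 : 0 ≤ M := by
    apply div_nonneg _ hρT.le
    nlinarith [mul_nonneg hρ.le hS0]
  have hgM : gsq t0 ≤ M := by
    rw [hM, le_div_iff₀ hρT]
    nlinarith [mul_le_mul_of_nonneg_left hTS hρ.le]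
  have hRHS : 2 * (f (x 0) - fstar) / (ρ * T) + (2 / T) * D + ρ * L * G ^ 2
      = 2 * M := by
    rw [hM]
    field_simp
  rw [hRHS]
  have : gsq t0 = ‖gradient f (x t0)‖ ^ 2 := rfl
  linarith
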